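/- Under the same setting, if ⟨x_j, a⟩ > 0 and ⟨b,a⟩/(‖b‖₂‖a‖₂) ≤ ⟨x_j,a⟩/(‖x_j‖₂‖a‖₂), then max_{θ ∈ Ω} ⟨-x_j, θ⟩ = -⟨x_j, θ₁*⟩ + (1/2)[‖x_j‖₂‖b‖₂ - ⟨x_j, b⟩]. -/

import Mathlib

open RealInnerProductSpace

set_option maxHeartbeats 1200000 in
/-- Theorem 3, Case 2: if `⟪x_j, a⟫ > 0` and `⟪b,a⟫/(‖b‖‖a‖) ≤ ⟪x_j,a⟫/(‖x_j‖‖a‖)`, then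
`max_{θ ∈ Ω} ⟪-x_j, θ⟫ = -⟪x_j, θ₁*⟫ + (1/2)(‖x_j‖‖b‖ - ⟪x_j, b⟫)`. -/
theorem stmt_13 {n p : ℕ} (X : Fin p → EuclideanSpace ℝ (Fin n))
    (y : EuclideanSpace ℝ (Fin n)) (hy : y ≠ 0) (lmax : ℝ)
    (hlmax : IsGreatest (Set.range fun j => |(⟪X j, y⟫)|) lmax)
    (lam1 lam2 : ℝ) (hlam2 : 0 < lam2) (hlam12 : lam2 < lam1) (hlam1le : lam1 ≤ lmax)
    (θ1 : EuclideanSpace ℝ (Fin n))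
    (hθ1mem : ∀ j, |(⟪X j, θ1⟫)| ≤ 1)
    (hθ1opt : ∀ θ : EuclideanSpace ℝ (Fin n), (∀ j, |(⟪X j, θ⟫)| ≤ 1) →
      ‖θ1 - (1 / lam1) • y‖ ≤ ‖θ - (1 / lam1) • y‖)
    (a b : EuclideanSpace ℝ (Fin n))
    (ha : a = (1 / lam1) • y - θ1) (hb : b = (1 / lam2) • y - θ1)
    (j : Fin p) (hj : X j ≠ 0)
    (hpos : ⟪X j, a⟫ > 0)
    (hangle : ⟪b, a⟫ / (‖b‖ * ‖a‖) ≤ ⟪X j, a⟫ / (‖X j‖ * ‖a‖)) :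
    IsGreatest {v : ℝ | ∃ θ : EuclideanSpace ℝ (Fin n),
        (⟪θ1 - (1 / lam1) • y, θ - θ1⟫ ≥ 0 ∧ ⟪θ - (1 / lam2) • y, θ1 - θ⟫ ≥ 0) ∧
        v = ⟪-X j, θ⟫}
      (-⟪X j, θ1⟫ + (1 / 2) * (‖X j‖ * ‖b‖ - ⟪X j, b⟫)) := by
  set x := X j with hxdef
  have hx : (0:ℝ) < ‖x‖ := norm_pos_iff.mpr hj
  have ha0 : a ≠ 0 := by
    intro h; rw [h, inner_zero_right] at hpos; exact lt_irrefl 0 hpos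
  have haN : (0:ℝ) < ‖a‖ := norm_pos_iff.mpr ha0
  -- key inequality: ⟪b,a⟫ * ‖x‖ ≤ ⟪x,a⟫ * ‖b‖
  have hkey : ⟪b, a⟫ * ‖x‖ ≤ ⟪x, a⟫ * ‖b‖ := by
    rcases eq_or_ne b 0 with hb0 | hb0
    · simp [hb0]
    · have hbN : (0:ℝ) < ‖b‖ := norm_pos_iff.mpr hb0
      have := (div_le_div_iff₀ (by positivity) (by positivity)).mp hangle
      nlinarith [hpos]
  set c : ℝ := ‖b‖ / (2 * ‖x‖) with hc
  have hcx : c * ‖x‖ = ‖b‖ / 2 := by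
    rw [hc]; field_simp
  set θs : EuclideanSpace ℝ (Fin n) := θ1 + (1/2 : ℝ) • b - c • x with hθs
  have hna : θ1 - (1 / lam1) • y = -a := by rw [ha]; abel
  have hd1 : θs - θ1 = (1/2 : ℝ) • b - c • x := by rw [hθs]; abel
  have hd2 : θs - (1 / lam2) • y = -((1/2 : ℝ) • b) - c • x := by
    rw [hθs]
    have : (1 / lam2) • y = b + θ1 := by rw [hb]; abel
    rw [this]; module
  have hd3 : θ1 - θs = -((1/2 : ℝ) • b - c • x) := by rw [hθs]; abel
  have hxx : ⟪x, x⟫ = ‖x‖ * ‖x‖ := real_inner_self_eq_norm_mul_norm x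
  have hbb : ⟪b, b⟫ = ‖b‖ * ‖b‖ := real_inner_self_eq_norm_mul_norm b
  constructor
  · refine ⟨θs, ⟨?_, ?_⟩, ?_⟩
    · have hmain : (1/2 : ℝ) * ⟪b, a⟫ ≤ c * ⟪x, a⟫ := by
        rw [hc, div_mul_eq_mul_div ‖b‖ (2 * ‖x‖) ⟪x, a⟫, le_div_iff₀ (by positivity)]
        nlinarith [hkey]
      rw [hna, hd1]
      simp only [inner_neg_left, inner_sub_right, inner_smul_right]
      rw [real_inner_comm a b, real_inner_comm a x] at hmain
      linarith [hmain]
    · rw [hd2, hd3]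
      simp only [inner_neg_left, inner_neg_right, inner_sub_left, inner_sub_right,
        inner_smul_left, inner_smul_right, RCLike.conj_to_real]
      have h2 : c * (c * ⟪x, x⟫) = ‖b‖ * ‖b‖ / 4 := by
        rw [hxx, hc]; field_simp; ring
      rw [real_inner_comm x b]
      linarith [h2, hbb]
    · have : θs = θ1 + ((1/2 : ℝ) • b - c • x) := by rw [hθs]; abel
      rw [this]
      simp only [inner_neg_left, inner_add_right, inner_sub_right, inner_smul_right]
      have h3 : c * ⟪x, x⟫ = ‖x‖ * ‖b‖ / 2 := by
        rw [hxx, hc]; field_simp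
      linarith [h3]
  · rintro v ⟨θ, ⟨h1, h2⟩, hv⟩
    set w : EuclideanSpace ℝ (Fin n) := θ - θ1 with hw
    -- from h2: ⟪w - b, w⟫ ≤ 0
    have hc2 : ⟪w, w⟫ - ⟪b, w⟫ ≤ 0 := by
      have e : θ - (1 / lam2) • y = w - b := by rw [hw, hb]; abel
      have e2 : θ1 - θ = -w := by rw [hw]; abel
      rw [e, e2] at h2
      simp only [inner_neg_right, inner_sub_left] at h2
      rw [real_inner_comm w b] at h2 ⊢
      linarith [h2]
    -- ‖w - (1/2)•b‖ ≤ ‖b‖/2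
    have hns : ‖w - (1/2 : ℝ) • b‖ ≤ ‖b‖ / 2 := by
      have hsq : ⟪w - (1/2 : ℝ) • b, w - (1/2 : ℝ) • b⟫ ≤ (‖b‖/2)^2 := by
        simp only [inner_sub_left, inner_sub_right, inner_smul_left, inner_smul_right,
          RCLike.conj_to_real]
        rw [real_inner_comm w b, real_inner_comm b w] at *
        nlinarith [hc2, hbb]
      have hsq' : ‖w - (1/2 : ℝ) • b‖^2 ≤ (‖b‖/2)^2 := by
        rwa [real_inner_self_eq_norm_sq] at hsq
      nlinarith [norm_nonneg (w - (1/2 : ℝ) • b), norm_nonneg b, hsq']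
    have hcs : ⟪-x, w - (1/2 : ℝ) • b⟫ ≤ ‖x‖ * (‖b‖/2) := by
      calc ⟪-x, w - (1/2 : ℝ) • b⟫ ≤ ‖-x‖ * ‖w - (1/2 : ℝ) • b‖ := real_inner_le_norm _ _
        _ ≤ ‖x‖ * (‖b‖/2) := by
            rw [norm_neg]
            exact mul_le_mul_of_nonneg_left hns (norm_nonneg x)
    have eθ : θ = θ1 + (1/2 : ℝ) • b + (w - (1/2 : ℝ) • b) := by rw [hw]; abel
    rw [hv, eθ]
    simp only [inner_neg_left, inner_add_right, inner_smul_right, inner_sub_right] at hcs ⊢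
    nlinarith [hcs]
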